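/- Every group homomorphism from the homeomorphism group of the Cantor space to a countable group is trivial (has trivial image). -/

import Mathlib

/-- The group of self-homeomorphisms of a topological space, under composition. -/
instance homeoGroup {X : Type*} [TopologicalSpace X] : Group (X ≃ₜ X) where
  mul f g := g.trans f
  one := Homeomorph.refl X
  inv := Homeomorph.symm
  mul_assoc _ _ _ := rfl
  one_mul _ := Homeomorph.ext fun _ => rfl
  mul_one _ := Homeomorph.ext fun _ => rfl
  inv_mul_cancel f := Homeomorph.ext f.symm_apply_apply

namespace CantorProof

abbrev X : Type := ℕ → Bool
abbrev G : Type := X ≃ₜ X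

lemma mul_apply (f g : G) (x : X) : (f * g) x = f (g x) := rfl
lemma inv_apply (f : G) (x : X) : (f⁻¹ : G) x = f.symm x := rfl
lemma one_apply (x : X) : (1 : G) x = x := rfl

/-- `g` is supported in `S`. -/
def Supp (g : G) (S : Set X) : Prop := ∀ x, x ∉ S → g x = x

lemma Supp.symm {g : G} {S : Set X} (h : Supp g S) : Supp (g.symm : G) S := by
  intro x hx
  have := h x hx
  conv_lhs => rw [← this]
  exact g.symm_apply_apply x

lemma Supp.inv {g : G} {S : Set X} (h : Supp g S) : Supp (g⁻¹ : G) S := h.symm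

lemma Supp.mem_iff {g : G} {S : Set X} (h : Supp g S) {x : X} : g x ∈ S ↔ x ∈ S := by
  constructor
  · intro hm; by_contra hx; rw [h x hx] at hm; exact hx hm
  · intro hx; by_contra hm
    have := h.symm (g x) hm
    simp only [Homeomorph.symm_apply_apply] at this
    rw [this] at hx; exact hm hx

lemma Supp.conj {g : G} {S : Set X} (h : Supp g S) (t : G) :
    Supp (t * g * t⁻¹) (t '' S) := by
  intro x hx
  have : t.symm x ∉ S := by
    intro hc; exact hx ⟨t.symm x, hc, t.apply_symm_apply x⟩
  simp only [mul_apply, inv_apply, h _ this, Homeomorph.apply_symm_apply]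

/-- helper to build homeomorphisms -/
def mkHomeo (f g : X → X) (hfg : ∀ x, f (g x) = x) (hgf : ∀ x, g (f x) = x)
    (hf : Continuous f) (hg : Continuous g) : G :=
  { toFun := f, invFun := g, left_inv := hgf, right_inv := hfg,
    continuous_toFun := hf, continuous_invFun := hg }

@[simp] lemma mkHomeo_apply (f g : X → X) (hfg hgf hf hg) (x : X) :
    (mkHomeo f g hfg hgf hf hg) x = f x := rfl
@[simp] lemma mkHomeo_symm_apply (f g : X → X) (hfg hgf hf hg) (x : X) :
    (mkHomeo f g hfg hgf hf hg).symm x = g x := rfl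

lemma isClopen_coord (i : ℕ) (b : Bool) : IsClopen {x : X | x i = b} :=
  (isClopen_discrete {b}).preimage (continuous_apply i)

lemma cont_if (p : X → Prop) [DecidablePred p] (hp : IsClopen {x | p x}) {f g : X → X}
    (hf : Continuous f) (hg : Continuous g) : Continuous fun x => if p x then f x else g x :=
  Continuous.if (by simp [hp.frontier_eq]) hf hg

/-- flip homeomorphism -/
def flip (u : X) : G :=
  mkHomeo (fun x i => xor (u i) (x i)) (fun x i => xor (u i) (x i))
    (fun x => by funext i; simp [Bool.xor_left_comm]) (fun x => by funext i; simp [Bool.xor_left_comm])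
    (continuous_pi fun i => Continuous.comp (g := fun b => xor (u i) b) continuous_of_discreteTopology (continuous_apply i))
    (continuous_pi fun i => Continuous.comp (g := fun b => xor (u i) b) continuous_of_discreteTopology (continuous_apply i))


@[simp] lemma flip_apply (u x : X) (i : ℕ) : flip u x i = xor (u i) (x i) := rfl

lemma flip_symm (u : X) : (flip u).symm = flip u := rfl

lemma flip_mul (u v : X) : flip u * flip v = flip (fun i => xor (u i) (v i)) := by
  apply Homeomorph.ext; intro x; funext i
  simp [mul_apply, Bool.xor_assoc]

/-- permutation homeomorphism: precompose with an equiv of ℕ. -/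
def permHomeo (e : ℕ ≃ ℕ) : G :=
  mkHomeo (fun x => x ∘ e) (fun x => x ∘ e.symm)
    (fun x => by funext i; simp) (fun x => by funext i; simp)
    (continuous_pi fun i => continuous_apply (e i))
    (continuous_pi fun i => continuous_apply (e.symm i))

lemma perm_conj_flip (e : ℕ ≃ ℕ) (u : X) :
    permHomeo e * flip u * (permHomeo e)⁻¹ = flip (u ∘ e) := by
  apply Homeomorph.ext; intro x; funext i
  simp [mul_apply, inv_apply, permHomeo, flip]

lemma not_countable_X : ¬ Countable X := by
  intro h
  obtain ⟨enc, henc⟩ := h.exists_injective_nat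
  have : Nonempty X := ⟨fun _ => false⟩
  set F : ℕ → X := Function.invFun enc with hF
  have hsurj : ∀ x : X, F (enc x) = x := fun x => Function.leftInverse_invFun henc x
  set d : X := fun n => ! (F n n) with hd
  have h1 : d (enc d) = !(F (enc d) (enc d)) := rfl
  rw [congrFun (hsurj d) (enc d)] at h1
  simp at h1


/- ===== swindle machinery ===== -/


def insf (x : X) : X := fun i => if i = 0 then false else if i = 1 then true else x (i-1)
def delf (x : X) : X := fun i => if i ≤ 1 then x i else x (i+1)
def flipT (x : X) : X := fun i => if i = 1 then true else x i
def insg (x : X) : X := fun i => if i ≤ 1 then x i else if i = 2 then true else x (i-1)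
def delg (x : X) : X := fun i => if i = 0 then x 0 else x (i+1)
def flipF (x : X) : X := fun i => if i = 1 then false else x i

def sf (x : X) : X :=
  if x 0 = true then x
  else if x 1 = true then insf x
  else if x 2 = true then delf x
  else flipT x

def sg (x : X) : X :=
  if x 0 = true then x
  else if x 1 = false then insg x
  else if x 2 = true then delg x
  else flipF x

lemma sf_t {x : X} (h : x 0 = true) : sf x = x := by simp [sf, h]
lemma sf_ins {x : X} (h0 : x 0 = false) (h1 : x 1 = true) : sf x = insf x := by
  simp [sf, h0, h1]
lemma sf_del {x : X} (h0 : x 0 = false) (h1 : x 1 = false) (h2 : x 2 = true) :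
    sf x = delf x := by simp [sf, h0, h1, h2]
lemma sf_flip {x : X} (h0 : x 0 = false) (h1 : x 1 = false) (h2 : x 2 = false) :
    sf x = flipT x := by simp [sf, h0, h1, h2]
lemma sg_t {x : X} (h : x 0 = true) : sg x = x := by simp [sg, h]
lemma sg_ins {x : X} (h0 : x 0 = false) (h1 : x 1 = false) : sg x = insg x := by
  simp [sg, h0, h1]
lemma sg_del {x : X} (h0 : x 0 = false) (h1 : x 1 = true) (h2 : x 2 = true) :
    sg x = delg x := by simp [sg, h0, h1, h2]
lemma sg_flip {x : X} (h0 : x 0 = false) (h1 : x 1 = true) (h2 : x 2 = false) :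
    sg x = flipF x := by simp [sg, h0, h1, h2]

lemma bool_ft {b : Bool} (h : ¬ b = true) : b = false := by revert h; cases b <;> simp
lemma bool_tf {b : Bool} (h : ¬ b = false) : b = true := by revert h; cases b <;> simp

lemma sg_sf (x : X) : sg (sf x) = x := by
  by_cases h0 : x 0 = true
  · rw [sf_t h0, sg_t h0]
  · have h0' := bool_ft h0
    by_cases h1 : x 1 = true
    · rw [sf_ins h0' h1, sg_del (by simp [insf]) (by simp [insf]) (by simp [insf, h1])]
      funext i
      rcases i with _ | i
      · simp [delg, insf, h0'.symm]
      · simp [delg, insf]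
    · have h1' := bool_ft h1
      by_cases h2 : x 2 = true
      · rw [sf_del h0' h1' h2, sg_ins (by simp [delf, h0']) (by simp [delf, h1'])]
        funext i
        rcases i with _ | (_ | i)
        · simp [insg, delf]
        · simp [insg, delf]
        · rcases i with _ | i
          · simp [insg, delf, h2.symm]
          · simp only [insg, delf]
            rw [if_neg (by omega), if_neg (by omega)]
            have e : i + 1 + 2 - 1 = i + 2 := by omega
            rw [e, if_neg (by omega)]
      · have h2' := bool_ft h2
        rw [sf_flip h0' h1' h2',
          sg_flip (by simp [flipT, h0']) (by simp [flipT]) (by simp [flipT, h2'])]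
        funext i
        by_cases hi : i = 1
        · subst hi; simp [flipF, h1'.symm]
        · simp [flipF, flipT, hi]

lemma sf_sg (x : X) : sf (sg x) = x := by
  by_cases h0 : x 0 = true
  · rw [sg_t h0, sf_t h0]
  · have h0' := bool_ft h0
    by_cases h1 : x 1 = false
    · rw [sg_ins h0' h1, sf_del (by simp [insg, h0']) (by simp [insg, h1]) (by simp [insg])]
      funext i
      rcases i with _ | (_ | i)
      · simp [delf, insg]
      · simp [delf, insg]
      · simp only [delf, insg]
        rw [if_neg (by omega), if_neg (by omega), if_neg (by omega)]
        congr 1 <;> omega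
    · have h1' := bool_tf h1
      by_cases h2 : x 2 = true
      · rw [sg_del h0' h1' h2, sf_ins (by simp [delg, h0']) (by simp [delg, h2])]
        funext i
        rcases i with _ | (_ | i)
        · simp [insf, delg, h0'.symm]
        · simp [insf, delg, h1'.symm]
        · simp only [insf, delg]
          rw [if_neg (by omega), if_neg (by omega)]
          have e : i + 2 - 1 = i + 1 := by omega
          rw [e, if_neg (by omega)]
      · have h2' := bool_ft h2
        rw [sg_flip h0' h1' h2',
          sf_flip (by simp [flipF, h0']) (by simp [flipF]) (by simp [flipF, h2'])]
        funext i
        by_cases hi : i = 1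
        · subst hi; simp [flipT, flipF, h1'.symm]
        · simp [flipT, flipF, hi]






lemma cont_insf : Continuous insf := continuous_pi fun i => by
  unfold insf; split_ifs <;> first | exact continuous_const | exact continuous_apply _
lemma cont_delf : Continuous delf := continuous_pi fun i => by
  unfold delf; split_ifs <;> first | exact continuous_const | exact continuous_apply _
lemma cont_flipT : Continuous flipT := continuous_pi fun i => by
  unfold flipT; split_ifs <;> first | exact continuous_const | exact continuous_apply _
lemma cont_insg : Continuous insg := continuous_pi fun i => by
  unfold insg; split_ifs <;> first | exact continuous_const | exact continuous_apply _
lemma cont_delg : Continuous delg := continuous_pi fun i => by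
  unfold delg; split_ifs <;> first | exact continuous_const | exact continuous_apply _
lemma cont_flipF : Continuous flipF := continuous_pi fun i => by
  unfold flipF; split_ifs <;> first | exact continuous_const | exact continuous_apply _

lemma cont_sf : Continuous sf := by
  unfold sf
  apply cont_if _ (isClopen_coord 0 true) continuous_id
  apply cont_if _ (isClopen_coord 1 true) cont_insf
  exact cont_if _ (isClopen_coord 2 true) cont_delf cont_flipT

lemma cont_sg : Continuous sg := by
  unfold sg
  apply cont_if _ (isClopen_coord 0 true) continuous_id
  apply cont_if _ (isClopen_coord 1 false) cont_insg
  exact cont_if _ (isClopen_coord 2 true) cont_delg cont_flipF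




def mk0 (z : X) : X := fun i => if i ≤ 2 then false else z (i - 3)
def mk (n : ℕ) (z : X) : X :=
  fun i => if i = 0 then false else if i ≤ n then true else if i = n+1 then false else z (i - n - 2)
def tl3 (u : X) : X := fun j => u (j + 3)

lemma mk_zero (n : ℕ) (z : X) : mk n z 0 = false := by simp [mk]
lemma mk_one (n : ℕ) (hn : 1 ≤ n) (z : X) : mk n z 1 = true := by
  simp only [mk]; rw [if_neg (by omega), if_pos (by omega)]
lemma mk_top (n : ℕ) (z : X) (hn : 1 ≤ n) : mk n z (n+1) = false := by
  simp only [mk]; rw [if_neg (by omega), if_neg (by omega)]; simp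

lemma tl3_mk0 (z : X) : tl3 (mk0 z) = z := by
  funext j; simp only [tl3, mk0]
  rw [if_neg (by omega)]; congr 1 <;> omega

lemma S0 (z : X) : sf (mk0 z) = mk 1 z := by
  rw [sf_flip (by simp [mk0]) (by simp [mk0]) (by simp [mk0])]
  funext i; simp only [flipT, mk0, mk]
  split_ifs <;> first | rfl | omega | (congr 1 <;> omega)

lemma S1 (n : ℕ) (hn : 1 ≤ n) (z : X) : sf (mk n z) = mk (n+1) z := by
  rw [sf_ins (mk_zero n z) (mk_one n hn z)]
  funext i; simp only [insf, mk]
  split_ifs <;> first | rfl | omega | (congr 1 <;> omega)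

lemma S0' (z : X) : sg (mk 1 z) = mk0 z := by rw [← S0, sg_sf]
lemma S1' (n : ℕ) (hn : 1 ≤ n) (z : X) : sg (mk (n+1) z) = mk n z := by
  rw [← S1 n hn, sg_sf]

def wsel (n : ℕ) (x : X) : X := fun j => if j ≤ 2 then false else x (j + n - 1)

open Classical in
noncomputable def kf (g : X → X) (x : X) : X :=
  if x 0 = true then x
  else if x 1 = false then g x
  else if h : ∃ i, x (i+1) = false then
    (fun i => if i < Nat.find h + 2 then x i else g (wsel (Nat.find h) x) (i - Nat.find h + 1))
  else x

lemma KT {g : X → X} {x : X} (h : x 0 = true) : kf g x = x := by simp [kf, h]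
lemma KA {g : X → X} {x : X} (h0 : x 0 = false) (h1 : x 1 = false) : kf g x = g x := by
  simp [kf, h0, h1]
lemma Kinf {g : X → X} {x : X} (h0 : x 0 = false) (h1 : x 1 = true)
    (h : ∀ i, x (i+1) = true) : kf g x = x := by
  have h' : ¬ ∃ i, x (i+1) = false := by
    rintro ⟨i, hi⟩; rw [h i] at hi; simp at hi
  simp [kf, h0, h1, h']

lemma Kdef {g : X → X} {x : X} (h0 : x 0 = false) (h1 : x 1 = true)
    (h : ∃ i, x (i+1) = false) :
    kf g x = fun i => if i < Nat.find h + 2 then x i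
      else g (wsel (Nat.find h) x) (i - Nat.find h + 1) := by
  simp [kf, h0, h1, h]

lemma mk_exists (n : ℕ) (hn : 1 ≤ n) (z : X) : ∃ i, (mk n z) (i+1) = false :=
  ⟨n, mk_top n z hn⟩

lemma mk_find (n : ℕ) (hn : 1 ≤ n) (z : X) (h : ∃ i, (mk n z) (i+1) = false) :
    Nat.find h = n := by
  refine (Nat.find_eq_iff h).mpr ⟨mk_top n z hn, ?_⟩
  intro m hm
  simp only [mk]
  rw [if_neg (by omega), if_pos (by omega)]
  simp

lemma wsel_mk (n : ℕ) (hn : 1 ≤ n) (z : X) : wsel n (mk n z) = mk0 z := by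
  funext j; simp only [wsel, mk0, mk]
  split_ifs <;> first | rfl | omega | (congr 1 <;> omega)

lemma Kmk {g : X → X} (n : ℕ) (hn : 1 ≤ n) (z : X) :
    kf g (mk n z) = mk n (tl3 (g (mk0 z))) := by
  have hex : ∃ i, (mk n z) (i+1) = false := mk_exists n hn z
  rw [Kdef (mk_zero n z) (mk_one n hn z) hex, mk_find n hn z hex, wsel_mk n hn z]
  funext i
  by_cases hi : i < n + 2
  · rw [if_pos hi]
    simp only [mk, tl3]
    split_ifs <;> first | rfl | omega
  · rw [if_neg hi]
    have : mk n (tl3 (g (mk0 z))) i = (g (mk0 z)) ((i - n - 2) + 3) := by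
      simp only [mk, tl3]
      rw [if_neg (by omega), if_neg (by omega), if_neg (by omega)]
    rw [this]
    congr 1 <;> omega

lemma REP {x : X} (h0 : x 0 = false) (h1 : x 1 = true) (h : ∃ i, x (i+1) = false) :
    1 ≤ Nat.find h ∧ x = mk (Nat.find h) (fun j => x (j + Nat.find h + 2)) := by
  set n := Nat.find h with hn
  have hspec : x (n+1) = false := Nat.find_spec h
  have hmin : ∀ m, m < n → x (m+1) = true := by
    intro m hm
    have := Nat.find_min h hm
    revert this; cases x (m+1) <;> simp
  have hn1 : 1 ≤ n := by
    by_contra hc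
    have h00 : n = 0 := by omega
    rw [h00] at hspec
    rw [h1] at hspec; simp at hspec
  refine ⟨hn1, ?_⟩
  funext i
  simp only [mk]
  split_ifs with c1 c2 c3
  · rw [c1, h0]
  · have hii : i = (i - 1) + 1 := by omega
    rw [hii]; exact hmin _ (by omega)
  · rw [c3]; exact hspec
  · congr 1; omega




lemma isOpen_cylAt (x : X) (m : ℕ) : IsOpen {y : X | ∀ i < m, y i = x i} := by
  have : {y : X | ∀ i < m, y i = x i} = Set.pi (↑(Finset.range m)) (fun i => ({x i} : Set Bool)) := by
    ext y; simp [Set.mem_pi]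
  rw [this]
  exact isOpen_set_pi (Finset.range m).finite_toSet (fun a _ => isOpen_discrete _)

lemma cyl_sub_open {V : Set X} (hV : IsOpen V) {x : X} (hx : x ∈ V) :
    ∃ m, ∀ y : X, (∀ i < m, y i = x i) → y ∈ V := by
  obtain ⟨I, u, h1, h2⟩ := (isOpen_pi_iff.mp hV) x hx
  refine ⟨(I.sup id) + 1, fun y hy => h2 ?_⟩
  intro a ha
  have : y a = x a := hy a (by
    have := Finset.le_sup (f := id) ha
    simpa using Nat.lt_succ_of_le this)
  rw [this]
  exact (h1 a ha).2

lemma cont_wsel (n : ℕ) : Continuous (wsel n) := continuous_pi fun j => by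
  unfold wsel; split_ifs <;> first | exact continuous_const | exact continuous_apply _

lemma cont_kf (g : X → X) (hc : Continuous g)
    (hmem : ∀ x : X, x 0 = false → x 1 = false → x 2 = false →
      ((g x) 0 = false ∧ (g x) 1 = false ∧ (g x) 2 = false))
    (hsupp : ∀ x : X, ¬(x 0 = false ∧ x 1 = false ∧ x 2 = false) → g x = x) :
    Continuous (kf g) := by
  rw [continuous_iff_continuousAt]
  intro x
  by_cases h0 : x 0 = true
  · apply ContinuousAt.congr continuousAt_id
    exact Filter.eventuallyEq_of_mem ((isClopen_coord 0 true).isOpen.mem_nhds h0)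
      (fun y hy => (KT hy).symm)
  · have h0' := bool_ft h0
    by_cases h1 : x 1 = false
    · apply ContinuousAt.congr hc.continuousAt
      have hop : IsOpen {y : X | y 0 = false ∧ y 1 = false} := by
        exact ((isClopen_coord 0 false).inter (isClopen_coord 1 false)).isOpen
      exact Filter.eventuallyEq_of_mem (hop.mem_nhds ⟨h0', h1⟩)
        (fun y hy => (KA hy.1 hy.2).symm)
    · have h1' := bool_tf h1
      by_cases hex : ∃ i, x (i+1) = false
      · set n := Nat.find hex with hndef
        have hn1 : 1 ≤ n := (REP h0' h1' hex).1
        set Fn : X → X := fun y => fun i =>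
          if i < n+2 then y i else g (wsel n y) (i - n + 1) with hFn
        have hcF : Continuous Fn := by
          apply continuous_pi
          intro i
          simp only [hFn]
          split_ifs
          · exact continuous_apply i
          · exact (continuous_apply _).comp (hc.comp (cont_wsel n))
        apply ContinuousAt.congr hcF.continuousAt
        apply Filter.eventuallyEq_of_mem ((isOpen_cylAt x (n+2)).mem_nhds (fun i _ => rfl))
        intro y hy
        have hy0 : y 0 = false := by rw [hy 0 (by omega)]; exact h0'
        have hy1 : y 1 = true := by rw [hy 1 (by omega)]; exact h1'
        have heyn : y (n+1) = false := by
          rw [hy (n+1) (by omega)]; exact Nat.find_spec hex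
        have hey : ∃ i, y (i+1) = false := ⟨n, heyn⟩
        have hfind : Nat.find hey = n := by
          refine (Nat.find_eq_iff hey).mpr ⟨heyn, fun m hm => ?_⟩
          rw [hy (m+1) (by omega)]
          have := Nat.find_min hex hm
          revert this; cases x (m+1) <;> simp
        rw [Kdef hy0 hy1 hey, hfind]
      · push_neg at hex
        have hfix : kf g x = x := Kinf h0' h1' (fun i => bool_tf (hex i))
        rw [ContinuousAt, hfix, Filter.tendsto_def]
        intro s hs
        obtain ⟨O, hOs, hOopen, hxO⟩ := mem_nhds_iff.mp hs
        obtain ⟨m, hm⟩ := cyl_sub_open hOopen hxO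
        have hW : {y : X | ∀ i < m + 2, y i = x i} ∈ nhds x :=
          (isOpen_cylAt x (m+2)).mem_nhds (fun i _ => rfl)
        apply Filter.mem_of_superset hW
        intro y hy
        have hy0 : y 0 = false := by rw [hy 0 (by omega)]; exact h0'
        have hy1 : y 1 = true := by rw [hy 1 (by omega)]; exact h1'
        have key : ∀ i < m, kf g y i = x i := by
          by_cases hey : ∃ i, y (i+1) = false
          · intro i hi
            have hnm : m ≤ Nat.find hey := by
              by_contra hcon
              push_neg at hcon
              have := Nat.find_spec hey
              rw [hy (Nat.find hey + 1) (by omega)] at this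
              have h2 := bool_tf (hex (Nat.find hey))
              rw [h2] at this; simp at this
            rw [Kdef hy0 hy1 hey]
            simp only
            rw [if_pos (by omega)]
            exact hy i (by omega)
          · push_neg at hey
            intro i hi
            rw [Kinf hy0 hy1 (fun j => bool_tf (hey j))]
            exact hy i (by omega)
        exact hOs (hm _ key)




section KInv
variable {g g' : X → X}
variable (hgg' : ∀ x, g' (g x) = x) (hg'g : ∀ x, g (g' x) = x)
variable (hgD : ∀ x : X, ¬(x 0 = false ∧ x 1 = false ∧ x 2 = false) → g x = x)
variable (hg'D : ∀ x : X, ¬(x 0 = false ∧ x 1 = false ∧ x 2 = false) → g' x = x)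

include hgg' hg'D in
lemma gmemD : ∀ x : X, (x 0 = false ∧ x 1 = false ∧ x 2 = false) →
    ((g x) 0 = false ∧ (g x) 1 = false ∧ (g x) 2 = false) := by
  intro x hx
  by_contra hc
  have := hg'D (g x) hc
  rw [hgg'] at this
  rw [← this] at hc
  exact hc hx

include hgg' hg'D in
lemma gmk0 (z : X) : g (mk0 z) = mk0 (tl3 (g (mk0 z))) := by
  have hD := gmemD hgg' hg'D (mk0 z) (by simp [mk0])
  funext i
  simp only [mk0, tl3]
  split_ifs with hi
  · interval_cases i
    · exact hD.1
    · exact hD.2.1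
    · exact hD.2.2
  · congr 1; omega

include hgg' hg'g hgD hg'D in
lemma kf_inv : ∀ x, kf g' (kf g x) = x := by
  intro x
  by_cases h0 : x 0 = true
  · rw [KT h0, KT h0]
  · have h0' := bool_ft h0
    by_cases h1 : x 1 = false
    · rw [KA h0' h1]
      have hc01 : (g x) 0 = false ∧ (g x) 1 = false := by
        by_cases h2 : x 2 = false
        · have := gmemD hgg' hg'D x ⟨h0', h1, h2⟩
          exact ⟨this.1, this.2.1⟩
        · rw [hgD x (by tauto)]
          exact ⟨h0', h1⟩
      rw [KA hc01.1 hc01.2, hgg']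
    · have h1' := bool_tf h1
      by_cases hex : ∃ i, x (i+1) = false
      · obtain ⟨hn1, hrep⟩ := REP h0' h1' hex
        set n := Nat.find hex
        set z : X := fun j => x (j + n + 2)
        rw [hrep, Kmk n hn1 z, Kmk n hn1 (tl3 (g (mk0 z))), ← gmk0 hgg' hg'D, hgg', tl3_mk0]
      · push_neg at hex
        have hall : ∀ i, x (i+1) = true := fun i => bool_tf (hex i)
        rw [Kinf h0' h1' hall, Kinf h0' h1' hall]

include hgg' hg'g hgD hg'D in
lemma comm_identity : ∀ x, kf g (sf (kf g' (sg x))) = g x := by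
  intro x
  by_cases h0 : x 0 = true
  · rw [sg_t h0, KT h0, sf_t h0, KT h0, hgD x (by simp [h0])]
  · have h0' := bool_ft h0
    by_cases h1 : x 1 = false
    · -- x0 = f, x1 = f : σ⁻¹ inserts true at 2
      rw [sg_ins h0' h1]
      have i0 : insg x 0 = false := by simpa [insg] using h0'
      have i1 : insg x 1 = false := by simpa [insg] using h1
      have i2 : insg x 2 = true := by simp [insg]
      rw [KA i0 i1, hg'D _ (by simp [i2])]
      rw [sf_del i0 i1 i2]
      have hdel : delf (insg x) = x := by
        funext i
        rcases i with _ | (_ | i)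
        · simp [delf, insg]
        · simp [delf, insg]
        · simp only [delf, insg]
          rw [if_neg (by omega), if_neg (by omega), if_neg (by omega)]
          congr 1 <;> omega
      rw [hdel, KA h0' h1]
    · have h1' := bool_tf h1
      by_cases hex : ∃ i, x (i+1) = false
      · obtain ⟨hn1, hrep⟩ := REP h0' h1' hex
        set n := Nat.find hex
        set z : X := fun j => x (j + n + 2)
        have hgx : g x = x := hgD x (by simp [h1'])
        rw [hgx, hrep]
        rcases Nat.lt_or_ge n 2 with hn2 | hn2
        · -- n = 1
          have hn : n = 1 := by omega
          rw [hn, S0' z]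
          have m0 : mk0 z 0 = false := by simp [mk0]
          have m1 : mk0 z 1 = false := by simp [mk0]
          rw [KA m0 m1, gmk0 hg'g hgD (g := g'), ← S0' (tl3 (g' (mk0 z))), sf_sg,
            Kmk 1 (by omega) _, ← gmk0 hg'g hgD (g := g'), hg'g, tl3_mk0]
        · -- n ≥ 2
          obtain ⟨p, hp⟩ : ∃ p, n = p + 1 := ⟨n - 1, by omega⟩
          have hp1 : 1 ≤ p := by omega
          rw [hp, S1' p hp1 z, Kmk p hp1 z, S1 p hp1 _, Kmk (p+1) (by omega) _,
            ← gmk0 hg'g hgD (g := g'), hg'g, tl3_mk0]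
      · push_neg at hex
        have hall : ∀ i, x (i+1) = true := fun i => bool_tf (hex i)
        have hsgx : sg x = x := by
          rw [sg_del h0' h1' (hall 1)]
          funext i
          rcases i with _ | i
          · simp [delg]
          · simp only [delg]
            rw [if_neg (by omega), hall (i+1), hall i]
        have hsfx : sf x = x := by
          rw [sf_ins h0' h1']
          funext i
          rcases i with _ | (_ | i)
          · simp [insf, h0'.symm]
          · simp [insf, h1'.symm]
          · simp only [insf]
            rw [if_neg (by omega), if_neg (by omega)]
            have e : i + 2 - 1 = i + 1 := by omega
            rw [e, hall i, hall (i+1)]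
        rw [hsgx, Kinf h0' h1' hall, hsfx, Kinf h0' h1' hall, hgD x (by simp [h1'])]

end KInv

/- ===== cylinders, prefix exchange, depth-shift ===== -/

def Cyl (w : List Bool) : Set X := {x | ∀ i, i < w.length → x i = w.getD i false}

instance CylDec (w : List Bool) : DecidablePred (· ∈ Cyl w) := fun _ =>
  Nat.decidableBallLT _ _

lemma isClopen_Cyl (w : List Bool) : IsClopen (Cyl w) := by
  have he : Cyl w = Set.pi (↑(Finset.range w.length))
      (fun i => ({w.getD i false} : Set Bool)) := by
    ext x; simp [Cyl, Set.mem_pi]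
  rw [he]
  constructor
  · exact isClosed_set_pi (fun a _ => isClosed_discrete _)
  · exact isOpen_set_pi (Finset.range w.length).finite_toSet (fun a _ => isOpen_discrete _)

/-- tail-exchange map sending `Cyl v` to `Cyl w` (wordwise prefix replacement). -/
def Ov (w : List Bool) (L : ℕ) (x : X) : X :=
  fun i => if i < w.length then w.getD i false else x (i - w.length + L)

lemma Ov_mem (w : List Bool) (L : ℕ) (x : X) : Ov w L x ∈ Cyl w := by
  intro i hi; simp [Ov, hi]

lemma cont_Ov (w : List Bool) (L : ℕ) : Continuous (Ov w L) :=
  continuous_pi fun i => by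
    unfold Ov; split_ifs <;> first | exact continuous_const | exact continuous_apply _

def prd (v w : List Bool) (x : X) : X :=
  if x ∈ Cyl v then Ov w v.length x else if x ∈ Cyl w then Ov v w.length x else x

structure Incomp (v w : List Bool) : Prop where
  j : ∃ j, j < v.length ∧ j < w.length ∧ v.getD j false ≠ w.getD j false

lemma Incomp.not_mem {v w : List Bool} (h : Incomp v w) {x : X} (hx : x ∈ Cyl v) :
    x ∉ Cyl w := by
  obtain ⟨j, hjv, hjw, hne⟩ := h.j
  intro hw
  exact hne ((hx j hjv).symm.trans (hw j hjw))

lemma Ov_Ov {v w : List Bool} (x : X) (hx : x ∈ Cyl v) :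
    Ov v w.length (Ov w v.length x) = x := by
  funext i
  simp only [Ov]
  split_ifs with h1 h2
  · exact (hx i h1).symm
  · omega
  · congr 1 <;> omega

lemma prd_invol {v w : List Bool} (h : Incomp v w) (x : X) : prd v w (prd v w x) = x := by
  by_cases hv : x ∈ Cyl v
  · have hyw := Ov_mem w v.length x
    have hyv : Ov w v.length x ∉ Cyl v := fun hc => (h.not_mem hc) hyw
    simp only [prd, if_pos hv, if_neg hyv, if_pos hyw]
    exact Ov_Ov x hv
  · by_cases hw : x ∈ Cyl w
    · have hyv := Ov_mem v w.length x
      simp only [prd, if_neg hv, if_pos hw, if_pos hyv]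
      exact Ov_Ov x hw
    · simp only [prd, if_neg hv, if_neg hw]

lemma cont_prd (v w : List Bool) : Continuous (prd v w) := by
  unfold prd
  apply cont_if _ (isClopen_Cyl v) (cont_Ov w v.length)
  exact cont_if _ (isClopen_Cyl w) (cont_Ov v w.length) continuous_id

def prdH (v w : List Bool) (h : Incomp v w) : G :=
  mkHomeo (prd v w) (prd v w) (prd_invol h) (prd_invol h) (cont_prd v w) (cont_prd v w)

lemma prdH_image {v w : List Bool} (h : Incomp v w) : (prdH v w h) '' Cyl v = Cyl w := by
  apply Set.eq_of_subset_of_subset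
  · rintro y ⟨x, hx, rfl⟩
    show prd v w x ∈ Cyl w
    rw [prd, if_pos hx]
    exact Ov_mem w v.length x
  · intro y hy
    refine ⟨Ov v w.length y, Ov_mem v w.length y, ?_⟩
    show prd v w (Ov v w.length y) = y
    rw [prd, if_pos (Ov_mem v w.length y)]
    exact Ov_Ov y hy

/-- depth-shift homeomorphism δ with δ '' [f^r] = [f^(r+1)]. -/
def df (x : X) : X :=
  if x 0 = false then (fun i => if i = 0 then false else x (i-1))
  else if x 1 = true then (fun i => x (i+1))
  else (fun i => if i = 0 then false else if i = 1 then true else x i)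

def dg (y : X) : X :=
  if y 0 = true then (fun i => if i = 0 then true else y (i-1))
  else if y 1 = true then (fun i => if i = 0 then true else if i = 1 then false else y i)
  else (fun i => y (i+1))

lemma df_a {x : X} (h0 : x 0 = false) :
    df x = fun i => if i = 0 then false else x (i-1) := by simp [df, h0]
lemma df_b {x : X} (h0 : x 0 = true) (h1 : x 1 = true) :
    df x = fun i => x (i+1) := by simp [df, h0, h1]
lemma df_c {x : X} (h0 : x 0 = true) (h1 : x 1 = false) :
    df x = fun i => if i = 0 then false else if i = 1 then true else x i := by
  simp [df, h0, h1]
lemma dg_a {y : X} (h0 : y 0 = true) :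
    dg y = fun i => if i = 0 then true else y (i-1) := by simp [dg, h0]
lemma dg_b {y : X} (h0 : y 0 = false) (h1 : y 1 = true) :
    dg y = fun i => if i = 0 then true else if i = 1 then false else y i := by
  simp [dg, h0, h1]
lemma dg_c {y : X} (h0 : y 0 = false) (h1 : y 1 = false) :
    dg y = fun i => y (i+1) := by simp [dg, h0, h1]

lemma dg_df (x : X) : dg (df x) = x := by
  by_cases h0 : x 0 = false
  · rw [df_a h0, dg_c (by simp) (by simpa using h0)]
    funext i
    rw [if_neg (by omega)]
    congr 1 <;> omega
  · have h0' := bool_tf h0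
    by_cases h1 : x 1 = true
    · rw [df_b h0' h1, dg_a (by simpa using h1)]
      funext i
      rcases i with _ | i
      · simpa using h0'.symm
      · rw [if_neg (by omega)]
        congr 1 <;> omega
    · have h1' := bool_ft h1
      rw [df_c h0' h1', dg_b (by simp) (by simp)]
      funext i
      rcases i with _ | (_ | i)
      · simpa using h0'.symm
      · simpa using h1'.symm
      · rw [if_neg (by omega), if_neg (by omega), if_neg (by omega), if_neg (by omega)]

lemma df_dg (y : X) : df (dg y) = y := by
  by_cases h0 : y 0 = true
  · rw [dg_a h0, df_b (by simp) (by simpa using h0)]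
    funext i
    rw [if_neg (by omega)]
    congr 1 <;> omega
  · have h0' := bool_ft h0
    by_cases h1 : y 1 = true
    · rw [dg_b h0' h1, df_c (by simp) (by simp)]
      funext i
      rcases i with _ | (_ | i)
      · simpa using h0'.symm
      · simpa using h1.symm
      · rw [if_neg (by omega), if_neg (by omega), if_neg (by omega), if_neg (by omega)]
    · have h1' := bool_ft h1
      rw [dg_c h0' h1', df_a (by simpa using h1')]
      funext i
      rcases i with _ | i
      · simpa using h0'.symm
      · rw [if_neg (by omega)]
        congr 1 <;> omega

lemma cont_df : Continuous df := by
  unfold df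
  apply cont_if _ (isClopen_coord 0 false)
  · exact continuous_pi fun i => by
      split_ifs <;> first | exact continuous_const | exact continuous_apply _
  apply cont_if _ (isClopen_coord 1 true)
  · exact continuous_pi fun i => continuous_apply _
  · exact continuous_pi fun i => by
      split_ifs <;> first | exact continuous_const | exact continuous_apply _

lemma cont_dg : Continuous dg := by
  unfold dg
  apply cont_if _ (isClopen_coord 0 true)
  · exact continuous_pi fun i => by
      split_ifs <;> first | exact continuous_const | exact continuous_apply _
  apply cont_if _ (isClopen_coord 1 true)
  · exact continuous_pi fun i => by
      split_ifs <;> first | exact continuous_const | exact continuous_apply _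
  · exact continuous_pi fun i => continuous_apply _

def dH : G := mkHomeo df dg df_dg dg_df cont_df cont_dg

def repF (m : ℕ) : List Bool := List.replicate m false

lemma mem_Cyl_repF {m : ℕ} {x : X} : x ∈ Cyl (repF m) ↔ ∀ i < m, x i = false := by
  unfold Cyl repF
  constructor <;> intro h i hi
  · have := h i (by simpa using hi)
    simpa using this
  · simp only [List.length_replicate] at hi ⊢
    rw [h i hi]
    simp [List.getD]

lemma dH_image (r : ℕ) (hr : 1 ≤ r) : dH '' Cyl (repF r) = Cyl (repF (r+1)) := by
  apply Set.eq_of_subset_of_subset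
  · rintro y ⟨x, hx, rfl⟩
    rw [mem_Cyl_repF] at hx ⊢
    intro i hi
    show df x i = false
    have hx0 : x 0 = false := hx 0 (by omega)
    rw [df_a hx0]
    by_cases h : i = 0
    · simp [h]
    · simp only [if_neg h]
      exact hx (i-1) (by omega)
  · intro y hy
    rw [mem_Cyl_repF] at hy
    refine ⟨fun i => y (i+1), ?_, ?_⟩
    · rw [mem_Cyl_repF]
      intro i hi
      exact hy (i+1) (by omega)
    · show df (fun i => y (i+1)) = y
      have h0 : (fun i => y (i+1)) 0 = false := hy 1 (by omega)
      rw [df_a h0]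
      funext i
      rcases i with _ | i
      · simpa using (hy 0 (by omega)).symm
      · rw [if_neg (by omega)]
        congr 1 <;> omega

lemma mul_image (a b : G) (S : Set X) : ((a * b : G)) '' S = a '' (b '' S) := by
  rw [Set.image_image]
  rfl

lemma inv_image (t : G) (A B : Set X) (h : t '' A = B) : (t⁻¹ : G) '' B = A := by
  rw [← h, Set.image_image]
  simp only [inv_apply, Homeomorph.symm_apply_apply, Set.image_id']

lemma image_compl (t : G) (S : Set X) : t '' Sᶜ = (t '' S)ᶜ := by
  apply Set.eq_of_subset_of_subset
  · rintro y ⟨x, hx, rfl⟩ ⟨x', hx', hxx⟩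
    exact hx (by rw [← t.injective hxx]; exact hx')
  · intro y hy
    refine ⟨t.symm y, ?_, t.apply_symm_apply y⟩
    intro hc
    exact hy ⟨t.symm y, hc, t.apply_symm_apply y⟩

/-- the set where the swindle-support lives -/
def D : Set X := {x | x 0 = false ∧ x 1 = false ∧ x 2 = false}

lemma D_eq_repF : D = Cyl (repF 3) := by
  ext x
  rw [mem_Cyl_repF]
  simp only [D, Set.mem_setOf_eq]
  constructor
  · rintro ⟨h0, h1, h2⟩ i hi
    interval_cases i <;> assumption
  · intro h
    exact ⟨h 0 (by omega), h 1 (by omega), h 2 (by omega)⟩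


section Main
variable {H : Type*} [Group H] [Countable H] (φ : G →* H)

/-- Step 1: some flip with true 0-th coordinate is in the kernel. -/
lemma step1 : ∃ u : X, u 0 = true ∧ φ (flip u) = 1 := by
  have : ¬ Function.Injective (fun v : X => φ (flip v)) := by
    intro hinj
    exact not_countable_X (Function.Injective.countable hinj)
  rw [Function.not_injective_iff] at this
  obtain ⟨v, w, hvw, hne⟩ := this
  have hne' : ∃ c, xor (v c) (w c) = true := by
    by_contra hc
    push_neg at hc
    apply hne; funext c
    have := hc c; revert this
    cases v c <;> cases w c <;> simp
  obtain ⟨c, hc⟩ := hne'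
  set u : X := fun i => xor (v i) (w i) with hu
  have hker : φ (flip u) = 1 := by
    have : flip u = flip v * flip w := by
      rw [flip_mul]
    rw [this, map_mul, hvw]
    have : φ (flip w) * φ (flip w) = 1 := by
      rw [← map_mul, flip_mul]
      have : (flip fun i => xor (w i) (w i)) = (1 : G) := by
        apply Homeomorph.ext; intro x; funext i; simp [one_apply]
      rw [this, map_one]
    exact this
  refine ⟨u ∘ Equiv.swap 0 c, by simp [hu, hc], ?_⟩
  rw [← perm_conj_flip, map_mul, map_mul, hker, mul_one, ← map_mul, mul_inv_cancel, map_one]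


/-- the half `x 0 = false` -/
def U : Set X := {x | x 0 = false}

lemma not_mem_U {x : X} : x ∉ U ↔ x 0 = true := by
  simp [U]

lemma Supp.coord0 {a : G} (ha : Supp a U) (y : X) : a y 0 = y 0 := by
  cases hy : y 0 with
  | true => rw [ha y (not_mem_U.mpr hy), hy]
  | false =>
    by_contra hc
    have h1 : a y 0 = true := by revert hc; cases a y 0 <;> simp
    have h2 : a (a y) = a y := ha (a y) (not_mem_U.mpr h1)
    have := a.injective h2
    rw [this, hy] at h1; simp at h1

lemma Supp.fix_true {a : G} (ha : Supp a U) {y : X} (hy : y 0 = true) : a y = y :=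
  ha y (not_mem_U.mpr hy)

/-- Step 2: commutators of half-supported elements die. -/
lemma step2 (u : X) (hu0 : u 0 = true) (hker : φ (flip u) = 1)
    (a b : G) (ha : Supp a U) (hb : Supp b U) :
    φ (a * b * a⁻¹ * b⁻¹) = 1 := by
  set h : G := flip u with hh
  have hflip0 : ∀ y : X, h y 0 = (! y 0) := by
    intro y; simp [hh, hu0]
  have hinv : (h⁻¹ : G) = h := rfl
  have hhh : ∀ y : X, h (h y) = y := by
    intro y; funext i; simp [hh, Bool.xor_left_comm]
  set c : G := a * h * a⁻¹ * h⁻¹ with hc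
  have hφc : φ c = 1 := by
    simp only [hc, map_mul, map_inv, hker, inv_one, mul_one]
    exact mul_inv_cancel _
  have hφ : φ (c * b * c⁻¹ * b⁻¹) = 1 := by
    simp only [map_mul, map_inv, hφc, inv_one, one_mul, mul_one]
    exact mul_inv_cancel _
  have key : c * b * c⁻¹ * b⁻¹ = a * b * a⁻¹ * b⁻¹ := by
    have ceq : ∀ z : X, c z = a (h (a.symm (h z))) := fun z => rfl
    have cUc : ∀ z : X, z 0 = true → c z = h (a.symm (h z)) := by
      intro z hz
      rw [ceq]
      have : (h (a.symm (h z))) 0 = true := by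
        rw [hflip0, (ha.symm).coord0, hflip0, hz]; rfl
      rw [ha.fix_true this]
    have cU : ∀ z : X, z 0 = false → c z = a z := by
      intro z hz
      rw [ceq]
      have h1 : (h z) 0 = true := by rw [hflip0, hz]; rfl
      rw [(ha.symm).fix_true h1, hhh]
    apply Homeomorph.ext; intro x
    simp only [mul_apply, inv_apply]
    cases hx : x 0 with
    | true =>
      have hq : (h (a (h x))) 0 = true := by
        rw [hflip0, ha.coord0, hflip0, hx]; rfl
      have hcsymm : c.symm x = h (a (h x)) := by
        apply c.injective
        rw [Homeomorph.apply_symm_apply, cUc _ hq, hhh, Homeomorph.symm_apply_apply, hhh]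
      rw [hb.symm.fix_true hx, hcsymm, hb.fix_true hq, cUc _ hq, hhh,
        Homeomorph.symm_apply_apply, hhh, ha.symm.fix_true hx, hb.fix_true hx, ha.fix_true hx]
    | false =>
      have hy : (b.symm x) 0 = false := by rw [hb.symm.coord0, hx]
      have hay : (a.symm (b.symm x)) 0 = false := by rw [ha.symm.coord0, hy]
      have hcsymm : c.symm (b.symm x) = a.symm (b.symm x) := by
        apply c.injective
        rw [Homeomorph.apply_symm_apply, cU _ hay, Homeomorph.apply_symm_apply]
      have hz1 : (b (a.symm (b.symm x))) 0 = false := by rw [hb.coord0, hay]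
      rw [hcsymm, cU _ hz1]
  rw [key] at hφ; exact hφ

def sigmaH : G := mkHomeo sf sg sf_sg sg_sf cont_sf cont_sg

lemma supp_sigmaH : Supp sigmaH U := by
  intro x hx
  exact sf_t (not_mem_U.mp hx)

section Swindle

lemma hgDfun {g : G} (hg : Supp g D) :
    ∀ x : X, ¬(x 0 = false ∧ x 1 = false ∧ x 2 = false) → g x = x :=
  fun x hx => hg x hx

lemma hgDfun' {g : G} (hg : Supp g D) :
    ∀ x : X, ¬(x 0 = false ∧ x 1 = false ∧ x 2 = false) → g.symm x = x :=
  fun x hx => hg.symm x hx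

variable {g : G} (hg : Supp g D)

noncomputable def kHomeo : G :=
  mkHomeo (kf g) (kf g.symm)
    (kf_inv (g := g.symm) (g' := g) (fun x => g.apply_symm_apply x)
      (fun x => g.symm_apply_apply x) (hgDfun' hg) (hgDfun hg))
    (kf_inv (g := g) (g' := g.symm) (fun x => g.symm_apply_apply x)
      (fun x => g.apply_symm_apply x) (hgDfun hg) (hgDfun' hg))
    (cont_kf g g.continuous
      (fun x h0 h1 h2 => gmemD (g := g) (g' := g.symm) (fun x => g.symm_apply_apply x)
        (hgDfun' hg) x ⟨h0, h1, h2⟩)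
      (hgDfun hg))
    (cont_kf g.symm g.symm.continuous
      (fun x h0 h1 h2 => gmemD (g := g.symm) (g' := g) (fun x => g.apply_symm_apply x)
        (hgDfun hg) x ⟨h0, h1, h2⟩)
      (hgDfun' hg))

lemma supp_kHomeo : Supp (kHomeo hg) U := by
  intro x hx
  exact KT (not_mem_U.mp hx)

lemma swindle_eq : g = kHomeo hg * sigmaH * (kHomeo hg)⁻¹ * sigmaH⁻¹ := by
  apply Homeomorph.ext
  intro x
  have := comm_identity (g := g) (g' := g.symm) (fun x => g.symm_apply_apply x)
    (fun x => g.apply_symm_apply x) (hgDfun hg) (hgDfun' hg) x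
  simp only [mul_apply, inv_apply]
  exact this.symm

end Swindle

/-- anything supported in a homeomorphic image of `D` dies under φ. -/
lemma killSuppD (hu : ∃ u : X, u 0 = true ∧ φ (flip u) = 1)
    (t g : G) (hg : Supp g (t '' D)) : φ g = 1 := by
  obtain ⟨u, hu0, hker⟩ := hu
  set g' : G := t⁻¹ * g * t with hg'
  have hsupp : Supp g' D := by
    have h1 : Supp (t⁻¹ * g * (t⁻¹)⁻¹) ((t⁻¹ : G) '' (t '' D)) := hg.conj t⁻¹
    have h2 : ((t⁻¹ : G) '' (t '' D)) = D := by
      rw [Set.image_image]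
      simp only [inv_apply, Homeomorph.symm_apply_apply, Set.image_id']
    rw [inv_inv] at h1
    rw [h2] at h1
    exact h1
  have hcomm := swindle_eq hsupp
  have hφg' : φ g' = 1 := by
    rw [hcomm]
    exact step2 φ u hu0 hker _ _ (supp_kHomeo hsupp) supp_sigmaH
  have : g = t * g' * t⁻¹ := by
    rw [hg']; group
  rw [this, map_mul, map_mul, hφg', mul_one, ← map_mul, mul_inv_cancel, map_one]

lemma Supp.mono {g : G} {S T : Set X} (h : Supp g S) (hST : S ⊆ T) : Supp g T :=
  fun x hx => h x (fun hS => hx (hST hS))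

lemma one_image (S : Set X) : (1 : G) '' S = S := by
  have : ⇑(1 : G) = id := rfl
  rw [this, Set.image_id]

lemma repF_getD (m i : ℕ) : (repF m).getD i false = false := by
  unfold repF
  rcases Nat.lt_or_ge i m with h | h
  · rw [List.getD_eq_getElem _ _ (by simpa using h)]
    simp
  · rw [List.getD_eq_default _ _ (by simpa using h)]

lemma Cyl_sub_D {L : ℕ} (hL : 3 ≤ L) : Cyl (repF L) ⊆ D := by
  intro x hx
  rw [mem_Cyl_repF] at hx
  exact ⟨hx 0 (by omega), hx 1 (by omega), hx 2 (by omega)⟩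

lemma Cyl_eq_repF_of_false {w : List Bool} (hall : ∀ j < w.length, w.getD j false = false) :
    Cyl w = Cyl (repF w.length) := by
  ext x
  rw [mem_Cyl_repF]
  constructor
  · intro h i hi
    rw [h i hi]
    exact hall i hi
  · intro h i hi
    rw [h i hi]
    exact (hall i hi).symm

lemma repF_length (m : ℕ) : (repF m).length = m := by simp [repF]

lemma dH2_image : (dH⁻¹ : G) '' D = Cyl (repF 2) := by
  refine inv_image dH _ _ ?_
  rw [dH_image 2 (by omega), D_eq_repF]

lemma dH1_image : ((dH⁻¹ * dH⁻¹ : G)) '' D = Cyl (repF 1) := by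
  rw [mul_image, dH2_image]
  exact inv_image dH _ _ (dH_image 1 (by omega))

lemma killCyl (hu : ∃ u : X, u 0 = true ∧ φ (flip u) = 1) :
    ∀ (w : List Bool), 1 ≤ w.length → ∀ g : G, Supp g (Cyl w) → φ g = 1 := by
  intro w hw g hg
  by_cases hall : ∀ j < w.length, w.getD j false = false
  · rw [Cyl_eq_repF_of_false hall] at hg
    set m := w.length with hm
    rcases Nat.lt_or_ge m 3 with h3 | h3
    · interval_cases m
      · -- m = 1
        refine killSuppD φ hu (dH⁻¹ * dH⁻¹) g (hg.mono ?_)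
        rw [dH1_image]
      · -- m = 2
        refine killSuppD φ hu (dH⁻¹) g (hg.mono ?_)
        rw [dH2_image]
    · refine killSuppD φ hu 1 g (hg.mono ?_)
      rw [one_image]
      exact Cyl_sub_D h3
  · push_neg at hall
    obtain ⟨j, hj, hjt⟩ := hall
    have hjt' : w.getD j false = true := bool_tf hjt
    set L := w.length + 3 with hL
    have hvw : Incomp (repF L) w :=
      ⟨⟨j, by rw [repF_length]; omega, hj, by rw [repF_getD, hjt']; simp⟩⟩
    refine killSuppD φ hu (prdH (repF L) w hvw) g (hg.mono ?_)
    rw [← prdH_image hvw]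
    exact Set.image_mono (Cyl_sub_D (by omega))

lemma compl_CylF : (Cyl (repF 1))ᶜ = Cyl [true] := by
  ext x
  have hrep : x ∈ Cyl (repF 1) ↔ x 0 = false := by
    rw [mem_Cyl_repF]
    constructor
    · intro h; exact h 0 (by omega)
    · intro h i hi
      have hi0 : i = 0 := by omega
      rw [hi0]; exact h
  have htrue : x ∈ Cyl [true] ↔ x 0 = true := by
    constructor
    · intro h
      have := h 0 (by simp)
      simpa using this
    · intro h i hi
      have hi0 : i = 0 := by simpa using hi
      rw [hi0]
      simpa using h
  simp only [Set.mem_compl_iff, hrep, htrue]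
  cases x 0 <;> simp

lemma shrinkCyl : ∀ r : ℕ, ∃ η : G, η '' Cyl (repF (r+1)) = Cyl (repF 1) := by
  intro r
  induction r with
  | zero => exact ⟨1, one_image _⟩
  | succ r ih =>
    obtain ⟨η, hη⟩ := ih
    refine ⟨η * dH⁻¹, ?_⟩
    rw [mul_image, inv_image dH _ _ (dH_image (r+1) (by omega)), hη]

lemma killCylCompl (hu : ∃ u : X, u 0 = true ∧ φ (flip u) = 1) :
    ∀ (v : List Bool), 1 ≤ v.length → ∀ g : G, Supp g (Cyl v)ᶜ → φ g = 1 := by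
  intro v hv g hg
  -- build η with η '' Cyl v = Cyl (repF 1)
  have hstep : ∃ η : G, η '' Cyl v = Cyl (repF 1) := by
    obtain ⟨η₂, hη₂⟩ := shrinkCyl (v.length - 1)
    have hlen : v.length - 1 + 1 = v.length := by omega
    rw [hlen] at hη₂
    by_cases hall : ∀ j < v.length, v.getD j false = false
    · exact ⟨η₂, by rw [← Cyl_eq_repF_of_false hall] at hη₂; exact hη₂⟩
    · push_neg at hall
      obtain ⟨j, hj, hjt⟩ := hall
      have hvw : Incomp v (repF v.length) :=
        ⟨⟨j, hj, by rw [repF_length]; omega, by rw [repF_getD, bool_tf hjt]; simp⟩⟩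
      refine ⟨η₂ * prdH v (repF v.length) hvw, ?_⟩
      rw [mul_image, prdH_image hvw, hη₂]
  obtain ⟨η, hη⟩ := hstep
  have hconj : Supp (η * g * η⁻¹) (Cyl [true]) := by
    have := hg.conj η
    rwa [image_compl, hη, compl_CylF] at this
  have h1 : φ (η * g * η⁻¹) = 1 := killCyl φ hu [true] (by simp) _ hconj
  have : g = η⁻¹ * (η * g * η⁻¹) * η := by group
  rw [this, map_mul, map_mul, h1, mul_one, map_inv, inv_mul_cancel]

lemma mem_Cyl_ofFn {m : ℕ} {x₀ x : X} :
    x ∈ Cyl (List.ofFn (fun i : Fin m => x₀ i)) ↔ ∀ i < m, x i = x₀ i := by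
  unfold Cyl
  simp only [Set.mem_setOf_eq, List.length_ofFn]
  constructor
  · intro h i hi
    have := h i hi
    rwa [List.getD_eq_getElem _ _ (by simpa using hi), List.getElem_ofFn] at this
  · intro h i hi
    rw [List.getD_eq_getElem _ _ (by simpa using hi), List.getElem_ofFn]
    exact h i hi

lemma main_kill : ∀ g : G, φ g = 1 := by
  have hu := step1 φ
  intro g
  by_cases hid : ∀ x, g x = x
  · have hone : g = 1 := Homeomorph.ext hid
    rw [hone, map_one]
  · push_neg at hid
    obtain ⟨x₀, hx₀⟩ := hid
    have hjj : ∃ j, g x₀ j ≠ x₀ j := by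
      by_contra hc; push_neg at hc; exact hx₀ (funext hc)
    obtain ⟨j, hj⟩ := hjj
    have hop : IsOpen {y : X | g y j = g x₀ j} :=
      ((isClopen_discrete ({g x₀ j} : Set Bool)).preimage
        ((continuous_apply j).comp g.continuous)).isOpen
    obtain ⟨m₀, hm₀⟩ := cyl_sub_open hop (by exact rfl)
    set m := max m₀ (max (j+1) 2) with hm
    set v := List.ofFn (fun i : Fin m => x₀ i) with hv
    have hvlen : v.length = m := by simp [hv]
    have hmem : ∀ x : X, x ∈ Cyl v ↔ ∀ i < m, x i = x₀ i := fun x => mem_Cyl_ofFn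
    have hmod : ∀ x : X, x ∈ Cyl v → g x j = g x₀ j := by
      intro x hx
      exact hm₀ x (fun i hi => (hmem x).mp hx i (by omega))
    have hDIS : ∀ x : X, x ∈ Cyl v → g x ∉ Cyl v := by
      intro x hx hgx
      apply hj
      rw [← hmod x hx]
      exact (hmem _).mp hgx j (by omega)
    set p : ℕ := if j = 0 then 1 else 0 with hp
    have hpj : p ≠ j := by
      by_cases h : j = 0
      · simp [hp, h]
      · simp only [hp, if_neg h]
        omega
    have hpm : p < m := by
      have : p ≤ 1 := by
        by_cases h : j = 0 <;> simp [hp, h]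
      omega
    have hjm : j < m := by omega
    set w₁ := v.set p (!(x₀ p)) with hw₁
    have hw₁len : w₁.length = m := by simp [hw₁, hvlen]
    have hw₁get : ∀ i, i < m → w₁.getD i false = if i = p then !(x₀ p) else x₀ i := by
      intro i hi
      rw [hw₁, List.getD_eq_getElem _ _ (by simp [hvlen]; omega)]
      rw [List.getElem_set]
      by_cases h : i = p
      · simp [h]
      · simp only [if_neg (by omega : ¬ p = i), if_neg h]
        simp [hv]
    classical
    set f1 : X → X := fun x =>
      if x ∈ Cyl v then g x else if g.symm x ∈ Cyl v then g.symm x else x with hf1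
    have hinvol : ∀ x, f1 (f1 x) = x := by
      intro x
      by_cases hx : x ∈ Cyl v
      · have hgx := hDIS x hx
        have hsx : g.symm (g x) ∈ Cyl v := by rw [g.symm_apply_apply]; exact hx
        have e1 : f1 x = g x := by simp only [hf1]; rw [if_pos hx]
        have e2 : f1 (g x) = g.symm (g x) := by
          simp only [hf1]; rw [if_neg hgx, if_pos hsx]
        rw [e1, e2, g.symm_apply_apply]
      · by_cases hx' : g.symm x ∈ Cyl v
        · have e1 : f1 x = g.symm x := by simp only [hf1]; rw [if_neg hx, if_pos hx']
          have e2 : f1 (g.symm x) = g (g.symm x) := by simp only [hf1]; rw [if_pos hx']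
          rw [e1, e2, g.apply_symm_apply]
        · have e1 : f1 x = x := by simp only [hf1]; rw [if_neg hx, if_neg hx']
          rw [e1, e1]
    have hcont : Continuous f1 := by
      rw [hf1]
      apply cont_if _ (isClopen_Cyl v) g.continuous
      exact cont_if _ ((isClopen_Cyl v).preimage g.symm.continuous)
        g.symm.continuous continuous_id
    set h1H : G := mkHomeo f1 f1 hinvol hinvol hcont hcont with hh1
    set h2 : G := h1H * g with hh2
    have hsupp1 : Supp h1H (Cyl w₁)ᶜ := by
      intro x hx
      have hxw : x ∈ Cyl w₁ := by simpa using hx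
      have hxv : x ∉ Cyl v := by
        intro hc
        have e1 : x p = x₀ p := (hmem x).mp hc p hpm
        have e2 : x p = !(x₀ p) := by
          have := hxw p (by rw [hw₁len]; omega)
          rwa [hw₁get p hpm, if_pos rfl] at this
        rw [e1] at e2
        simp at e2
      have hsxv : g.symm x ∉ Cyl v := by
        intro hc
        have hxj : x j = g x₀ j := by
          have := hmod _ hc
          rwa [g.apply_symm_apply] at this
        have hxj' : x j = x₀ j := by
          have := hxw j (by rw [hw₁len]; omega)
          rwa [hw₁get j hjm, if_neg (fun h => hpj h.symm)] at this
        exact hj (by rw [← hxj, hxj'])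
      show f1 x = x
      simp only [hf1]; rw [if_neg hxv, if_neg hsxv]
    have hsupp2 : Supp h2 (Cyl v)ᶜ := by
      intro x hx
      have hxv : x ∈ Cyl v := by simpa using hx
      have hgx := hDIS x hxv
      have hsx : g.symm (g x) ∈ Cyl v := by rw [g.symm_apply_apply]; exact hxv
      show f1 (g x) = x
      simp only [hf1]; rw [if_neg hgx, if_pos hsx, g.symm_apply_apply]
    have hinv : h1H * h1H = 1 := Homeomorph.ext fun x => hinvol x
    have geq : g = h1H * h2 := by
      rw [hh2, ← mul_assoc, hinv, one_mul]
    rw [geq, map_mul,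
      killCylCompl φ hu w₁ (by rw [hw₁len]; omega) h1H hsupp1,
      killCylCompl φ hu v (by rw [hvlen]; omega) h2 hsupp2, mul_one]

end Main
end CantorProof

/-- Every group homomorphism from the homeomorphism group of the Cantor space
`ℕ → Bool` to a countable group is trivial (has trivial image). -/
theorem homeomorphGroup_cantor_hom_to_countable_trivial
    {H : Type*} [Group H] [Countable H]
    (φ : ((ℕ → Bool) ≃ₜ (ℕ → Bool)) →* H) :
    ∀ g : (ℕ → Bool) ≃ₜ (ℕ → Bool), φ g = 1 :=
  CantorProof.main_kill φ
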